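/- arXiv:2012.01819 — 2 statements merged into one kernel-verified Lean document; each statement's English description precedes it below -/
import Mathlib

section
/- The joint density of (z, τ₁), where z = τ₁/√(vd) + √(1 + τ₁²/d) · τ₂/√(d+1) with τ₁ ~ t(d) and τ₂ ~ t(d+1) independent, is proportional to (1 + (1/d)·(d·z² - 2·(√(vd)/v)·z·τ₁ + ((v+1)/v)·τ₁²))^(-(d+2)/2), which is the kernel of a bivariate t-distribution with d degrees of freedom, zero location vector, and dispersion matrix Ω with entries Ω₁₁ = (v+1)/(vd), Ω₁₂ = Ω₂₁ = √(vd)/(vd), Ω₂₂ = 1. -/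
open MeasureTheory ProbabilityTheory Real Matrix

/-- Density of the standard t-distribution with `d` degrees of freedom. -/
noncomputable def tdens (d t : ℝ) : ℝ :=
  Real.Gamma ((d + 1) / 2) / (Real.Gamma (d / 2) * Real.sqrt (Real.pi * d)) *
    (1 + t ^ 2 / d) ^ (-((d + 1) / 2))

open scoped ENNReal

noncomputable def C₀ (d : ℝ) : ℝ :=
  Real.Gamma ((d + 1) / 2) / (Real.Gamma (d / 2) * Real.sqrt (Real.pi * d)) *
    (Real.Gamma ((d + 2) / 2) / (Real.Gamma ((d + 1) / 2) * Real.sqrt (Real.pi * (d + 1)))) *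
    Real.sqrt (d + 1)

lemma C₀_pos {d : ℝ} (hd : 0 < d) : 0 < C₀ d := by
  unfold C₀
  have h1 : 0 < Real.Gamma ((d + 1) / 2) := Real.Gamma_pos_of_pos (by linarith)
  have h2 : 0 < Real.Gamma (d / 2) := Real.Gamma_pos_of_pos (by linarith)
  have h3 : 0 < Real.Gamma ((d + 2) / 2) := Real.Gamma_pos_of_pos (by linarith)
  have hpi := Real.pi_pos
  positivity

lemma tdens_pos {d : ℝ} (hd : 0 < d) (t : ℝ) : 0 < tdens d t := by
  unfold tdens
  have h1 : 0 < Real.Gamma ((d + 1) / 2) := Real.Gamma_pos_of_pos (by linarith)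
  have h2 : 0 < Real.Gamma (d / 2) := Real.Gamma_pos_of_pos (by linarith)
  have hpi := Real.pi_pos
  have h4 : (0:ℝ) < 1 + t ^ 2 / d := by positivity
  exact mul_pos (by positivity) (Real.rpow_pos_of_pos h4 _)

lemma tdens_meas (d : ℝ) : Measurable (tdens d) := by
  unfold tdens
  exact measurable_const.mul
    ((measurable_const.add ((measurable_id.pow_const 2).div_const d)).pow measurable_const)

lemma quad_eq {d v : ℝ} (hd : 0 < d) (hv : 0 < v) (t w : ℝ) :
    (1 + t ^ 2 / d) + (w - t / Real.sqrt (v * d)) ^ 2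
      = 1 + (1 / d) * (d * w ^ 2 - 2 * (Real.sqrt (v * d) / v) * w * t
          + ((v + 1) / v) * t ^ 2) := by
  have hs : Real.sqrt (v * d) ^ 2 = v * d := Real.sq_sqrt (by positivity)
  have hs0 : Real.sqrt (v * d) ≠ 0 := by positivity
  generalize hgen : Real.sqrt (v * d) = s at hs hs0
  field_simp
  linear_combination (t*(2*s*w - t)) * hs

lemma key_eq {d v : ℝ} (hd : 0 < d) (hv : 0 < v) (t w : ℝ) :
    tdens d t *
        tdens (d + 1) ((w - t / Real.sqrt (v * d)) /
          (Real.sqrt (1 + t ^ 2 / d) / Real.sqrt (d + 1))) *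
        (Real.sqrt (1 + t ^ 2 / d) / Real.sqrt (d + 1))⁻¹
      = C₀ d * (1 + (1 / d) * (d * w ^ 2 - 2 * (Real.sqrt (v * d) / v) * w * t
          + ((v + 1) / v) * t ^ 2)) ^ (-((d + 2) / 2)) := by
  have hq : (0:ℝ) < 1 + t ^ 2 / d := by positivity
  set q : ℝ := 1 + t ^ 2 / d with hqdef
  have hd1 : (0:ℝ) < d + 1 := by linarith
  set a : ℝ := t / Real.sqrt (v * d) with hadef
  set b : ℝ := Real.sqrt q / Real.sqrt (d + 1) with hbdef
  have hb : 0 < b := div_pos (Real.sqrt_pos.2 hq) (Real.sqrt_pos.2 hd1)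
  have hb2 : b ^ 2 = q / (d + 1) := by
    rw [hbdef, div_pow, Real.sq_sqrt hq.le, Real.sq_sqrt hd1.le]
  have hu : 1 + ((w - a) / b) ^ 2 / (d + 1) = (q + (w - a) ^ 2) / q := by
    rw [div_pow, hb2]
    field_simp
  have hP : (0:ℝ) ≤ q + (w - a) ^ 2 := by positivity
  have h21 : d + 1 + 1 = d + 2 := by ring
  have hQ : q + (w - a) ^ 2
      = 1 + (1 / d) * (d * w ^ 2 - 2 * (Real.sqrt (v * d) / v) * w * t
          + ((v + 1) / v) * t ^ 2) := quad_eq hd hv t w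
  have hpow : q ^ (-((d + 1) / 2)) / q ^ (-((d + 2) / 2)) / Real.sqrt q = 1 := by
    rw [Real.sqrt_eq_rpow, ← Real.rpow_sub hq, ← Real.rpow_sub hq,
      show -((d + 1) / 2) - -((d + 2) / 2) - 1 / 2 = (0:ℝ) from by ring, Real.rpow_zero]
  rw [show tdens d t = Real.Gamma ((d + 1) / 2) / (Real.Gamma (d / 2) *
        Real.sqrt (Real.pi * d)) * q ^ (-((d + 1) / 2)) from rfl]
  rw [tdens, h21, hu, Real.div_rpow hP hq.le, ← hQ]
  rw [hbdef, inv_div]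
  unfold C₀
  calc Real.Gamma ((d + 1) / 2) / (Real.Gamma (d / 2) * Real.sqrt (Real.pi * d)) *
        q ^ (-((d + 1) / 2)) *
        (Real.Gamma ((d + 2) / 2) / (Real.Gamma ((d + 1) / 2) * Real.sqrt (Real.pi * (d + 1))) *
          ((q + (w - a) ^ 2) ^ (-((d + 2) / 2)) / q ^ (-((d + 2) / 2)))) *
        (Real.sqrt (d + 1) / Real.sqrt q)
      = Real.Gamma ((d + 1) / 2) / (Real.Gamma (d / 2) * Real.sqrt (Real.pi * d)) *
        (Real.Gamma ((d + 2) / 2) / (Real.Gamma ((d + 1) / 2) * Real.sqrt (Real.pi * (d + 1)))) *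
        Real.sqrt (d + 1) * (q + (w - a) ^ 2) ^ (-((d + 2) / 2)) *
        (q ^ (-((d + 1) / 2)) / q ^ (-((d + 2) / 2)) / Real.sqrt q) := by ring
    _ = _ := by rw [hpow]; ring

lemma map_affine (a : ℝ) {b : ℝ} (hb : 0 < b) :
    Measure.map (fun x => a + b * x) (volume : Measure ℝ)
      = ENNReal.ofReal b⁻¹ • volume := by
  have h : (fun x : ℝ => a + b * x) = (fun x => a + x) ∘ (b * ·) := rfl
  rw [h, ← Measure.map_map (measurable_const_add a) (measurable_const_mul b),
    Real.map_volume_mul_left hb.ne', Measure.map_smul,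
    show (fun x : ℝ => a + x) = (a + ·) from rfl, map_add_left_eq_self,
    abs_of_pos (inv_pos.2 hb)]

lemma main_map (d v : ℝ) (hd : 0 < d) (hv : 0 < v) :
    (((volume : Measure ℝ).withDensity fun t => ENNReal.ofReal (tdens d t)).prod
        ((volume : Measure ℝ).withDensity fun t => ENNReal.ofReal (tdens (d + 1) t))).map
        (fun p : ℝ × ℝ =>
          (p.1 / Real.sqrt (v * d) + Real.sqrt (1 + p.1 ^ 2 / d) * (p.2 / Real.sqrt (d + 1)),
            p.1))
      = (volume : Measure (ℝ × ℝ)).withDensity (fun p =>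
          ENNReal.ofReal (C₀ d * (1 + (1 / d) *
            (d * p.1 ^ 2 - 2 * (Real.sqrt (v * d) / v) * p.1 * p.2 +
              ((v + 1) / v) * p.2 ^ 2)) ^ (-((d + 2) / 2)))) := by
  set f₁ : ℝ → ℝ≥0∞ := fun t => ENNReal.ofReal (tdens d t) with hf₁
  set f₂ : ℝ → ℝ≥0∞ := fun t => ENNReal.ofReal (tdens (d + 1) t) with hf₂
  set ψ : ℝ × ℝ → ℝ × ℝ := fun p =>
    (p.1 / Real.sqrt (v * d) + Real.sqrt (1 + p.1 ^ 2 / d) * (p.2 / Real.sqrt (d + 1)), p.1)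
    with hψdef
  set h : ℝ × ℝ → ℝ≥0∞ := fun p =>
    ENNReal.ofReal (C₀ d * (1 + (1 / d) *
      (d * p.1 ^ 2 - 2 * (Real.sqrt (v * d) / v) * p.1 * p.2 +
        ((v + 1) / v) * p.2 ^ 2)) ^ (-((d + 2) / 2))) with hhdef
  have hf₁m : Measurable f₁ := ENNReal.measurable_ofReal.comp (tdens_meas d)
  have hf₂m : Measurable f₂ := ENNReal.measurable_ofReal.comp (tdens_meas (d + 1))
  have hψ : Measurable ψ := by
    apply Measurable.prodMk
    · exact (measurable_fst.div_const _).add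
        (((measurable_const.add ((measurable_fst.pow_const 2).div_const d)).sqrt).mul
          (measurable_snd.div_const _))
    · exact measurable_fst
  have hhm : Measurable h := by
    apply ENNReal.measurable_ofReal.comp
    apply Measurable.mul measurable_const
    apply Measurable.pow _ measurable_const
    apply Measurable.add measurable_const
    apply Measurable.mul measurable_const
    exact (((measurable_fst.pow_const 2).const_mul d).sub
        ((measurable_fst.const_mul _).mul measurable_snd)).add
      ((measurable_snd.pow_const 2).const_mul _)
  ext s hs
  rw [Measure.map_apply hψ hs, withDensity_apply _ hs, Measure.prod_apply (hψ hs)]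
  rw [lintegral_withDensity_eq_lintegral_mul _ hf₁m
    (measurable_measure_prodMk_left (hψ hs))]
  rw [← lintegral_indicator hs h, Measure.volume_eq_prod, lintegral_prod _
    ((hhm.indicator hs).aemeasurable)]
  rw [lintegral_lintegral_swap (f := fun x y => s.indicator h (x, y))
    (((hhm.indicator hs).comp (measurable_fst.prodMk measurable_snd)).aemeasurable)]
  apply lintegral_congr
  intro t₁
  -- fixed t₁
  have hq : (0:ℝ) < 1 + t₁ ^ 2 / d := by positivity
  set a : ℝ := t₁ / Real.sqrt (v * d) with hadef
  set b : ℝ := Real.sqrt (1 + t₁ ^ 2 / d) / Real.sqrt (d + 1) with hbdef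
  have hb : 0 < b := div_pos (Real.sqrt_pos.2 hq) (Real.sqrt_pos.2 (by linarith))
  set s' : Set ℝ := (fun w => (w, t₁)) ⁻¹' s with hs'def
  have hs'm : MeasurableSet s' := hs.preimage (measurable_id.prodMk measurable_const)
  have hψpt : ∀ t₂ : ℝ, ψ (t₁, t₂) = (a + b * t₂, t₁) := by
    intro t₂
    simp only [hψdef, hadef, hbdef]
    congr 1
    ring
  have hslice : Prod.mk t₁ ⁻¹' (ψ ⁻¹' s) = (fun t₂ => a + b * t₂) ⁻¹' s' := by
    ext t₂
    simp only [Set.mem_preimage, hψpt t₂, hs'def]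
  set G : ℝ → ℝ≥0∞ := s'.indicator (fun w => f₂ ((w - a) / b)) with hGdef
  have hGm : Measurable G :=
    (hf₂m.comp ((measurable_id.sub_const a).div_const b)).indicator hs'm
  have hind : ∀ t₂ : ℝ, ((fun x => a + b * x) ⁻¹' s').indicator f₂ t₂ = G (a + b * t₂) := by
    intro t₂
    by_cases hmem : a + b * t₂ ∈ s'
    · have h2 : (a + b * t₂ - a) / b = t₂ := by field_simp; ring
      have h3 : b * t₂ / b = t₂ := by field_simp
      simp [hGdef, Set.indicator_apply, hmem, h2, h3]
    · simp [hGdef, Set.indicator_apply, hmem]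
  have haffm : Measurable fun x : ℝ => a + b * x :=
    measurable_const.add (measurable_id.const_mul b)
  have hmu2 : ((volume : Measure ℝ).withDensity f₂) (Prod.mk t₁ ⁻¹' (ψ ⁻¹' s))
      = ENNReal.ofReal b⁻¹ * ∫⁻ w, G w := by
    rw [hslice, withDensity_apply _ (haffm hs'm), ← lintegral_indicator (haffm hs'm) f₂,
      lintegral_congr hind,
      show (fun t₂ : ℝ => G (a + b * t₂)) = fun t₂ => G ((fun x => a + b * x) t₂) from rfl,
      ← lintegral_map hGm haffm, map_affine a hb, lintegral_smul_measure, smul_eq_mul]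
  simp only [Pi.mul_apply]
  rw [hmu2, ← mul_assoc, ← lintegral_const_mul _ hGm]
  apply lintegral_congr
  intro w
  by_cases hmem : (w, t₁) ∈ s
  · have hmem' : w ∈ s' := hmem
    have hnn1 : 0 ≤ tdens d t₁ := (tdens_pos hd t₁).le
    have hnn2 : 0 ≤ b⁻¹ := by positivity
    rw [hGdef]
    simp only [Set.indicator_of_mem hmem', Set.indicator_of_mem hmem, hhdef, hf₁, hf₂]
    rw [← ENNReal.ofReal_mul hnn1, ← ENNReal.ofReal_mul (mul_nonneg hnn1 hnn2)]
    congr 1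
    calc tdens d t₁ * b⁻¹ * tdens (d + 1) ((w - a) / b)
        = tdens d t₁ * tdens (d + 1) ((w - a) / b) * b⁻¹ := by ring
      _ = _ := key_eq hd hv t₁ w

  · have hmem' : w ∉ s' := hmem
    simp [hGdef, Set.indicator_apply, hmem, hmem']

theorem stmt1
    {Ω : Type*} [MeasurableSpace Ω] (P : Measure Ω) [IsProbabilityMeasure P]
    (d v : ℝ) (hd : 0 < d) (hv : 0 < v)
    (τ₁ τ₂ : Ω → ℝ) (hmeas1 : Measurable τ₁) (hmeas2 : Measurable τ₂)
    (hindep : IndepFun τ₁ τ₂ P)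
    (h1 : P.map τ₁ = volume.withDensity (fun t => ENNReal.ofReal (tdens d t)))
    (h2 : P.map τ₂ = volume.withDensity (fun t => ENNReal.ofReal (tdens (d + 1) t)))
    (z : Ω → ℝ)
    (hz : z = fun ω =>
      τ₁ ω / Real.sqrt (v * d) +
        Real.sqrt (1 + (τ₁ ω) ^ 2 / d) * (τ₂ ω / Real.sqrt (d + 1))) :
    (∃ C : ℝ, 0 < C ∧
      P.map (fun ω => (z ω, τ₁ ω)) =
        (volume : Measure (ℝ × ℝ)).withDensity (fun p =>
          ENNReal.ofReal (C * (1 + (1 / d) *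
            (d * p.1 ^ 2 - 2 * (Real.sqrt (v * d) / v) * p.1 * p.2 +
              ((v + 1) / v) * p.2 ^ 2)) ^ (-((d + 2) / 2)))))
    ∧
    (!![(v + 1) / (v * d), Real.sqrt (v * d) / (v * d);
        Real.sqrt (v * d) / (v * d), 1] : Matrix (Fin 2) (Fin 2) ℝ) *
      !![d, -(Real.sqrt (v * d) / v); -(Real.sqrt (v * d) / v), (v + 1) / v] = 1 := by
  constructor
  · refine ⟨C₀ d, C₀_pos hd, ?_⟩
    have hψ : Measurable (fun p : ℝ × ℝ =>
        (p.1 / Real.sqrt (v * d) + Real.sqrt (1 + p.1 ^ 2 / d) * (p.2 / Real.sqrt (d + 1)),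
          p.1)) := by
      apply Measurable.prodMk
      · exact (measurable_fst.div_const _).add
          (((measurable_const.add ((measurable_fst.pow_const 2).div_const d)).sqrt).mul
            (measurable_snd.div_const _))
      · exact measurable_fst
    have hzfun : (fun ω => (z ω, τ₁ ω)) = (fun p : ℝ × ℝ =>
        (p.1 / Real.sqrt (v * d) + Real.sqrt (1 + p.1 ^ 2 / d) * (p.2 / Real.sqrt (d + 1)),
          p.1)) ∘ (fun ω => (τ₁ ω, τ₂ ω)) := by
      rw [hz]; rfl
    rw [hzfun, ← Measure.map_map hψ (hmeas1.prodMk hmeas2),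
      (ProbabilityTheory.indepFun_iff_map_prod_eq_prod_map_map hmeas1.aemeasurable
        hmeas2.aemeasurable).mp hindep,
      h1, h2, main_map d v hd hv]
  · have hsq : Real.sqrt (v * d) ^ 2 = v * d := Real.sq_sqrt (by positivity)
    have hv' : v ≠ 0 := hv.ne'
    have hd' : d ≠ 0 := hd.ne'
    generalize hgen : Real.sqrt (v * d) = sq at hsq ⊢
    ext i j
    fin_cases i <;> fin_cases j <;>
      simp [Matrix.mul_apply, Fin.sum_univ_two, Matrix.one_apply] <;>
      field_simp <;>
      first
        | ring1
        | linear_combination (-(v * d)) * hsq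
        | linear_combination (-v) * hsq
        | linear_combination (-1) * hsq
end

section
/- With the notation of the mean-variance problem (Σ positive definite, μ ∈ ℝᵏ, s = μᵀMμ > 0), the minimizer of wᵀΣw subject to 𝟙ᵀw = 1 and μᵀw = R₀ is w* = w_GMV + ((R₀ − R_GMV)/s)·Mμ, and its minimal variance is V* = V_GMV + (R₀ − R_GMV)²/s. That is, for any w with 𝟙ᵀw = 1 and μᵀw = R₀, one has wᵀΣw ≥ V_GMV + (R₀ − R_GMV)²/s, with equality iff w = w*. -/
open Matrix

lemma vmv_mulVec {k : ℕ} (u v x : Fin k → ℝ) :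
    vecMulVec u v *ᵥ x = (v ⬝ᵥ x) • u := by
  funext i
  simp only [mulVec, vecMulVec_apply, dotProduct, Pi.smul_apply, smul_eq_mul, Finset.sum_mul]
  exact Finset.sum_congr rfl fun j _ => by ring

lemma symm_dot {k : ℕ} {A : Matrix (Fin k) (Fin k) ℝ} (hA : Aᵀ = A) (x y : Fin k → ℝ) :
    x ⬝ᵥ (A *ᵥ y) = y ⬝ᵥ (A *ᵥ x) := by
  rw [dotProduct_mulVec, ← mulVec_transpose, hA, dotProduct_comm]

theorem stmt11
    {k : ℕ} (Sig : Matrix (Fin k) (Fin k) ℝ)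
    (hsym : Sig.IsSymm) (hpos : Sig.PosDef)
    (μ : Fin k → ℝ) (hμ : ∀ c : ℝ, μ ≠ fun _ => c) (R₀ : ℝ)
    (w_GMV : Fin k → ℝ)
    (hw : w_GMV = ((1 : Fin k → ℝ) ⬝ᵥ (Sig⁻¹ *ᵥ (1 : Fin k → ℝ)))⁻¹ •
      (Sig⁻¹ *ᵥ (1 : Fin k → ℝ)))
    (R_GMV : ℝ)
    (hR : R_GMV = ((1 : Fin k → ℝ) ⬝ᵥ (Sig⁻¹ *ᵥ μ)) /
      ((1 : Fin k → ℝ) ⬝ᵥ (Sig⁻¹ *ᵥ (1 : Fin k → ℝ))))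
    (V_GMV : ℝ)
    (hV : V_GMV = ((1 : Fin k → ℝ) ⬝ᵥ (Sig⁻¹ *ᵥ (1 : Fin k → ℝ)))⁻¹)
    (M : Matrix (Fin k) (Fin k) ℝ)
    (hM : M = Sig⁻¹ -
      ((1 : Fin k → ℝ) ⬝ᵥ (Sig⁻¹ *ᵥ (1 : Fin k → ℝ)))⁻¹ •
        vecMulVec (Sig⁻¹ *ᵥ (1 : Fin k → ℝ)) (vecMul (1 : Fin k → ℝ) Sig⁻¹))
    (s : ℝ) (hs : s = μ ⬝ᵥ (M *ᵥ μ))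
    (wstar : Fin k → ℝ)
    (hwstar : wstar = w_GMV + ((R₀ - R_GMV) / s) • (M *ᵥ μ)) :
    ∀ w : Fin k → ℝ, (1 : Fin k → ℝ) ⬝ᵥ w = 1 → μ ⬝ᵥ w = R₀ →
      (w ⬝ᵥ (Sig *ᵥ w) ≥ V_GMV + (R₀ - R_GMV) ^ 2 / s
      ∧ (w ⬝ᵥ (Sig *ᵥ w) = V_GMV + (R₀ - R_GMV) ^ 2 / s ↔ w = wstar)) := by
  intro w h1w hμw
  have hdet : IsUnit Sig.det := isUnit_iff_ne_zero.mpr hpos.det_pos.ne'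
  set A := Sig⁻¹ with hAdef
  have hApos : A.PosDef := hpos.inv
  have hAsymm : Aᵀ = A := by
    rw [hAdef, transpose_nonsing_inv, hsym.eq]
  have hSsymm : Sigᵀ = Sig := hsym.eq
  -- k > 0
  have hk : 0 < k := by
    rcases Nat.eq_zero_or_pos k with h0 | h0
    · subst h0
      exact absurd (funext fun i => i.elim0) (hμ 0)
    · exact h0
  set c : ℝ := (1 : Fin k → ℝ) ⬝ᵥ (A *ᵥ (1 : Fin k → ℝ)) with hcdef
  set b : ℝ := (1 : Fin k → ℝ) ⬝ᵥ (A *ᵥ μ) with hbdef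
  have h1ne : (1 : Fin k → ℝ) ≠ 0 := by
    intro h
    have := congrFun h ⟨0, hk⟩
    simpa using this
  have hc : 0 < c := by
    have := hApos.dotProduct_mulVec_pos h1ne
    simpa using this
  have hcne : c ≠ 0 := hc.ne'
  have hμA1 : μ ⬝ᵥ (A *ᵥ (1 : Fin k → ℝ)) = b := (symm_dot hAsymm μ 1).trans rfl
  -- M *ᵥ μ
  have hMμ : M *ᵥ μ = A *ᵥ μ - (b / c) • (A *ᵥ (1 : Fin k → ℝ)) := by
    rw [hM, sub_mulVec, smul_mulVec, vmv_mulVec]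
    have : (1 : Fin k → ℝ) ᵥ* A ⬝ᵥ μ = b := by
      rw [← dotProduct_mulVec]
    rw [this, smul_smul]
    congr 1
    rw [div_eq_inv_mul]
  have hRbc : R_GMV = b / c := hR
  have h1Mμ : (1 : Fin k → ℝ) ⬝ᵥ (M *ᵥ μ) = 0 := by
    rw [hMμ, dotProduct_sub, dotProduct_smul, ← hbdef, ← hcdef, smul_eq_mul]
    field_simp
    ring
  -- s value and positivity
  have hμMμ : μ ⬝ᵥ (M *ᵥ μ) = μ ⬝ᵥ (A *ᵥ μ) - b / c * b := by
    rw [hMμ, dotProduct_sub, dotProduct_smul, hμA1, smul_eq_mul]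
  have hspos : 0 < s := by
    set v : Fin k → ℝ := μ - (b / c) • (1 : Fin k → ℝ) with hvdef
    have hvne : v ≠ 0 := by
      intro h
      apply hμ (b / c)
      funext i
      have := congrFun h i
      simp [hvdef, sub_eq_zero] at this
      simpa using this
    have hv : 0 < v ⬝ᵥ (A *ᵥ v) := by
      have := hApos.dotProduct_mulVec_pos hvne
      simpa using this
    have hexp : v ⬝ᵥ (A *ᵥ v) = μ ⬝ᵥ (A *ᵥ μ) - b / c * b := by
      simp only [hvdef, mulVec_sub, mulVec_smul, dotProduct_sub, sub_dotProduct,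
        dotProduct_smul, smul_dotProduct, smul_eq_mul, hμA1, ← hbdef, ← hcdef]
      field_simp
      ring
    rw [hs, hμMμ, ← hexp]
    exact hv
  have hsne : s ≠ 0 := hspos.ne'
  -- constraints for wstar
  have h1g : (1 : Fin k → ℝ) ⬝ᵥ w_GMV = 1 := by
    rw [hw, dotProduct_smul, ← hcdef, smul_eq_mul, inv_mul_cancel₀ hcne]
  have hμg : μ ⬝ᵥ w_GMV = b / c := by
    rw [hw, dotProduct_smul, hμA1, smul_eq_mul, div_eq_inv_mul]
  have h1star : (1 : Fin k → ℝ) ⬝ᵥ wstar = 1 := by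
    rw [hwstar, dotProduct_add, dotProduct_smul, h1g, h1Mμ]
    simp
  have hμstar : μ ⬝ᵥ wstar = R₀ := by
    rw [hwstar, dotProduct_add, dotProduct_smul, hμg, ← hs, smul_eq_mul, hRbc]
    field_simp
    ring
  -- Sig *ᵥ wstar
  set t : ℝ := (R₀ - R_GMV) / s with htdef
  set u : Fin k → ℝ := c⁻¹ • (1 : Fin k → ℝ) + t • (μ - (b / c) • (1 : Fin k → ℝ)) with hudef
  have hSA : ∀ x : Fin k → ℝ, Sig *ᵥ (A *ᵥ x) = x := by
    intro x
    rw [mulVec_mulVec, mul_nonsing_inv Sig hdet, one_mulVec]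
  have hws2 : wstar = A *ᵥ u := by
    rw [hwstar, hw, hMμ, hudef, mulVec_add, mulVec_smul, mulVec_smul, mulVec_sub, mulVec_smul]
  have hSu : Sig *ᵥ wstar = u := by rw [hws2, hSA]
  -- orthogonality
  set d : Fin k → ℝ := w - wstar with hddef
  have h1d : (1 : Fin k → ℝ) ⬝ᵥ d = 0 := by
    rw [hddef, dotProduct_sub, h1w, h1star, sub_self]
  have hμd : μ ⬝ᵥ d = 0 := by
    rw [hddef, dotProduct_sub, hμw, hμstar, sub_self]
  have hdu : d ⬝ᵥ u = 0 := by
    have h1 : d ⬝ᵥ (1 : Fin k → ℝ) = 0 := by rw [dotProduct_comm]; exact h1d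
    have h2 : d ⬝ᵥ μ = 0 := by rw [dotProduct_comm]; exact hμd
    simp [hudef, dotProduct_add, dotProduct_smul, dotProduct_sub, h1, h2]
  have hstaru : wstar ⬝ᵥ u = V_GMV + (R₀ - R_GMV) ^ 2 / s := by
    have h1 : wstar ⬝ᵥ (1 : Fin k → ℝ) = 1 := by rw [dotProduct_comm]; exact h1star
    have h2 : wstar ⬝ᵥ μ = R₀ := by rw [dotProduct_comm]; exact hμstar
    simp only [hudef, dotProduct_add, dotProduct_smul, dotProduct_sub, h1, h2, smul_eq_mul,
      hV, ← hcdef, htdef, hRbc]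
    field_simp
  -- key decomposition
  have hweq : w = wstar + d := by rw [hddef]; abel
  have hkey : w ⬝ᵥ (Sig *ᵥ w) = (V_GMV + (R₀ - R_GMV) ^ 2 / s) + d ⬝ᵥ (Sig *ᵥ d) := by
    rw [hweq]
    rw [mulVec_add, dotProduct_add, add_dotProduct, add_dotProduct, hSu]
    have hcross : wstar ⬝ᵥ (Sig *ᵥ d) = d ⬝ᵥ u := by
      rw [symm_dot hSsymm, hSu]
    rw [hcross, hdu, hstaru]
    ring
  have hdnn : 0 ≤ d ⬝ᵥ (Sig *ᵥ d) := by
    have := hpos.posSemidef.dotProduct_mulVec_nonneg d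
    simpa using this
  constructor
  · rw [hkey]; linarith
  · constructor
    · intro h
      have hd0 : d ⬝ᵥ (Sig *ᵥ d) = 0 := by linarith [hkey ▸ h]
      by_contra hne
      have hdne : d ≠ 0 := by
        intro h0
        apply hne
        rw [hweq, h0, add_zero]
      have := hpos.dotProduct_mulVec_pos hdne
      simp only [star_trivial] at this
      linarith
    · intro h
      rw [hkey, hddef, h, sub_self]
      simp
end
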